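/- Let α ∈ (0,2], let f(·|α,γ) denote the symmetric α-stable density with dispersion γ, and suppose x ↦ log f(x|α,1) is integrable with respect to the standard symmetric α-stable law. Fix m ≥ 1, dispersions γ₁,…,γ_m > 0 and γ′₁,…,γ′_m > 0, and nonnegative integers k, k′ (total numbers of edges). Let (Z_{j,λ})_{λ≥1} and (Z′_{j,λ})_{λ≥1}, j = 1,…,m, be sequences of independent random variables with Z_{j,λ} having density f(·|α,γ_j) and Z′_{j,λ} having density f(·|α,γ′_j). Define the BIC scores S_BIC(N) = Σ_{j=1}^m Σ_{λ=1}^N log f(Z_{j,λ}|α,γ_j) − (k/2)·log N and S′_BIC(N) = Σ_{j=1}^m Σ_{λ=1}^N log f(Z′_{j,λ}|α,γ′_j) − (k′/2)·log N, and the penalized dispersion (MDC) scores S_MDC(N) = −Σ_{j=1}^m ( N·(log γ_j)/α + (k/2)·log N ) and S′_MDC(N) analogously with γ′_j and k′. Then almost surely lim_{N→∞} (1/N)·( S_BIC(N) − S′_BIC(N) ) = lim_{N→∞} (1/N)·( S_MDC(N) − S′_MDC(N) ) = −(1/α)·Σ_{j=1}^m ( log γ_j − log γ′_j ); i.e.,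 the minimum dispersion criterion is asymptotically equivalent to the Bayesian information criterion for symmetric α-stable graphical models. -/

import Mathlib

open MeasureTheory ProbabilityTheory

/-- The (real-valued) symmetric α-stable density with dispersion `γ`, via Fourier inversion. -/
noncomputable def sdens (α γ x : ℝ) : ℝ :=
  (1 / (2 * Real.pi)) *
    (∫ q : ℝ, Complex.exp (((-(γ * |q| ^ α) : ℝ) : ℂ)) *
      Complex.exp (-(Complex.I * ((q * x : ℝ) : ℂ)))).re

open Real Set
open scoped NNReal ENNReal

lemma cont_absrpow {α : ℝ} (hα : 0 < α) : Continuous fun q : ℝ => |q| ^ α :=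
  Continuous.rpow_const continuous_abs (fun _ => Or.inr hα.le)

lemma cont_expabs (α γ : ℝ) (hα : 0 < α) : Continuous fun q : ℝ => Real.exp (-(γ * |q| ^ α)) :=
  ((continuous_const.mul (cont_absrpow hα)).neg).rexp

lemma integrable_expabs {α γ : ℝ} (hα : 0 < α) (hγ : 0 < γ) :
    Integrable fun q : ℝ => Real.exp (-(γ * |q| ^ α)) := by
  have hcont := cont_expabs α γ hα
  have hIoi : IntegrableOn (fun q : ℝ => Real.exp (-(γ * |q| ^ α))) (Ioi 0) := by
    rw [← Ioc_union_Ioi_eq_Ioi (zero_le_one), integrableOn_union]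
    constructor
    · refine Measure.integrableOn_of_bounded (M := 1) (by simp) hcont.aestronglyMeasurable ?_
      filter_upwards with x
      rw [Real.norm_eq_abs, abs_of_pos (exp_pos _)]
      exact Real.exp_le_one_iff.2 (neg_nonpos.2 (by positivity))
    · set n : ℕ := ⌈2 / α⌉₊ with hn
      have hn2 : 2 ≤ (n : ℝ) * α := by
        have : 2 / α ≤ (n : ℝ) := Nat.le_ceil _
        calc (2 : ℝ) = (2 / α) * α := by field_simp
          _ ≤ (n : ℝ) * α := by gcongr
      have key : ∀ x : ℝ, 1 ≤ x →
          Real.exp (-(γ * |x| ^ α)) ≤ (n.factorial / γ ^ n) * x ^ (-2 : ℝ) := by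
        intro x hx
        have hx0 : (0:ℝ) < x := lt_of_lt_of_le one_pos hx
        have habs : |x| = x := abs_of_pos hx0
        have h1 : (γ * x ^ α) ^ n / n.factorial ≤ Real.exp (γ * x ^ α) := by
          calc (γ * x ^ α) ^ n / n.factorial
              = ∑ i ∈ Finset.range (n+1),
                  (if i = n then (γ * x ^ α) ^ i / i.factorial else 0) := by simp
            _ ≤ ∑ i ∈ Finset.range (n+1), (γ * x ^ α) ^ i / i.factorial := by
                apply Finset.sum_le_sum; intro i _
                split_ifs with h
                · exact le_rfl
                · positivity
            _ ≤ Real.exp (γ * x ^ α) := Real.sum_le_exp_of_nonneg (by positivity) _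
        have hxa : x ^ (2:ℝ) ≤ (x ^ α) ^ n := by
          rw [← Real.rpow_natCast (x ^ α) n, ← Real.rpow_mul hx0.le]
          exact Real.rpow_le_rpow_of_exponent_le hx (by rw [mul_comm]; exact hn2)
        have hfac : (0:ℝ) < n.factorial := by positivity
        rw [habs, Real.exp_neg]
        rw [inv_le_iff_one_le_mul₀ (Real.exp_pos _)] at *
        -- rearrange : goal 1 ≤ (n!/γ^n * x^(-2)) * exp (γ x^α)
        have hx2 : (0:ℝ) < x ^ (2:ℝ) := Real.rpow_pos_of_pos hx0 _
        have hstep : x ^ (2:ℝ) * γ ^ n / n.factorial ≤ Real.exp (γ * x ^ α) := by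
          refine le_trans ?_ h1
          rw [mul_pow, div_le_div_iff₀ hfac hfac]
          have := mul_le_mul_of_nonneg_left hxa (le_of_lt (pow_pos hγ n))
          nlinarith [this, hfac]
        rw [Real.rpow_neg hx0.le]
        calc (1:ℝ) = (↑n.factorial / γ ^ n * (x ^ (2:ℝ))⁻¹) * (x ^ (2:ℝ) * γ ^ n / n.factorial) := by
              field_simp
          _ ≤ (↑n.factorial / γ ^ n * (x ^ (2:ℝ))⁻¹) * Real.exp (γ * x ^ α) := by
              have h0 : (0:ℝ) ≤ ↑n.factorial / γ ^ n * (x ^ (2:ℝ))⁻¹ := by positivity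
              exact mul_le_mul_of_nonneg_left hstep h0
      have hi2 : IntegrableOn (fun x : ℝ => (n.factorial / γ ^ n) * x ^ (-2 : ℝ)) (Ioi 1) :=
        (integrableOn_Ioi_rpow_of_lt (by norm_num) one_pos).const_mul _
      refine hi2.mono' hcont.aestronglyMeasurable.restrict ?_
      filter_upwards [ae_restrict_mem measurableSet_Ioi] with x hx
      rw [Real.norm_eq_abs, abs_of_pos (exp_pos _)]
      exact key x (le_of_lt hx)
  rw [← integrableOn_univ, ← @Iio_union_Ici _ _ (0 : ℝ), integrableOn_union,
    integrableOn_Ici_iff_integrableOn_Ioi]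
  refine ⟨?_, hIoi⟩
  rw [← (Measure.measurePreserving_neg (volume : Measure ℝ)).integrableOn_comp_preimage
      (Homeomorph.neg ℝ).measurableEmbedding]
  simp only [Function.comp_def, neg_preimage, neg_Iio, neg_neg, neg_zero, abs_neg]
  exact hIoi

lemma norm_integrand (α γ x q : ℝ) :
    ‖Complex.exp (((-(γ * |q| ^ α) : ℝ) : ℂ)) * Complex.exp (-(Complex.I * ((q * x : ℝ) : ℂ)))‖
      = Real.exp (-(γ * |q| ^ α)) := by
  rw [norm_mul, Complex.norm_exp, Complex.norm_exp]
  simp [Complex.mul_re]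

lemma cont_integrand (α γ x : ℝ) (hα : 0 < α) :
    Continuous fun q : ℝ => Complex.exp (((-(γ * |q| ^ α) : ℝ) : ℂ)) *
      Complex.exp (-(Complex.I * ((q * x : ℝ) : ℂ))) := by
  apply Continuous.mul
  · exact Complex.continuous_exp.comp
      (Complex.continuous_ofReal.comp ((continuous_const.mul (cont_absrpow hα)).neg))
  · exact Complex.continuous_exp.comp
      ((continuous_const.mul (Complex.continuous_ofReal.comp ((continuous_mul_right x)))).neg)

lemma integrable_integrand (α γ x : ℝ) (hα : 0 < α) (hγ : 0 < γ) :
    Integrable fun q : ℝ => Complex.exp (((-(γ * |q| ^ α) : ℝ) : ℂ)) *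
      Complex.exp (-(Complex.I * ((q * x : ℝ) : ℂ))) := by
  refine (integrable_expabs hα hγ).mono' (cont_integrand α γ x hα).aestronglyMeasurable ?_
  filter_upwards with q
  rw [norm_integrand]

lemma cont_sdens (α γ : ℝ) (hα : 0 < α) (hγ : 0 < γ) : Continuous (sdens α γ) := by
  unfold sdens
  apply Continuous.mul continuous_const
  apply Complex.continuous_re.comp
  apply MeasureTheory.continuous_of_dominated
    (bound := fun q => Real.exp (-(γ * |q| ^ α)))
  · exact fun x => (cont_integrand α γ x hα).aestronglyMeasurable
  · intro x; filter_upwards with q; rw [norm_integrand]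
  · exact integrable_expabs hα hγ
  · filter_upwards with q
    apply Continuous.mul continuous_const
    exact Complex.continuous_exp.comp
      ((continuous_const.mul (Complex.continuous_ofReal.comp (continuous_const.mul continuous_id))).neg)

lemma sdens_zero_pos (α γ : ℝ) (hα : 0 < α) (hγ : 0 < γ) : 0 < sdens α γ 0 := by
  unfold sdens
  have : ∀ q : ℝ, Complex.exp (((-(γ * |q| ^ α) : ℝ) : ℂ)) *
      Complex.exp (-(Complex.I * ((q * 0 : ℝ) : ℂ)))
      = ((Real.exp (-(γ * |q| ^ α)) : ℝ) : ℂ) := by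
    intro q; simp [Complex.ofReal_exp]
  rw [show (∫ q : ℝ, Complex.exp (((-(γ * |q| ^ α) : ℝ) : ℂ)) *
      Complex.exp (-(Complex.I * ((q * 0 : ℝ) : ℂ))))
      = ∫ q : ℝ, ((Real.exp (-(γ * |q| ^ α)) : ℝ) : ℂ) from integral_congr_ae (by filter_upwards with q; rw [this])]
  have hre : (∫ q : ℝ, ((Real.exp (-(γ * |q| ^ α)) : ℝ) : ℂ)).re
      = ∫ q : ℝ, Real.exp (-(γ * |q| ^ α)) := by
    have h2 := integral_re ((integrable_expabs hα hγ).ofReal (𝕜 := ℂ))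
    simp only [RCLike.re_to_complex, Complex.ofReal_re] at h2
    exact h2.symm
  rw [hre]
  have hpos : 0 < ∫ q : ℝ, Real.exp (-(γ * |q| ^ α)) := by
    apply (integral_pos_iff_support_of_nonneg (fun q => (exp_pos _).le) (integrable_expabs hα hγ)).2
    have hsupp : Function.support (fun q : ℝ => Real.exp (-(γ * |q| ^ α))) = Set.univ :=
      Set.eq_univ_of_forall fun q => (exp_pos _).ne'
    rw [hsupp]
    simp
  have h2π : 0 < 1 / (2 * Real.pi) := by positivity
  positivity

lemma sdens_scaling (α γ x : ℝ) (hα : 0 < α) (hγ : 0 < γ) :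
    sdens α γ x = γ ^ (-(1/α)) * sdens α 1 (γ ^ (-(1/α)) * x) := by
  set c := γ ^ (-(1/α)) with hc
  have hcpos : 0 < c := Real.rpow_pos_of_pos hγ _
  have hcinv : c⁻¹ = γ ^ (1/α : ℝ) := by rw [hc, ← Real.rpow_neg hγ.le, neg_neg]
  have hpow : (c⁻¹) ^ α = γ := by
    rw [hcinv, ← Real.rpow_mul hγ.le, one_div, inv_mul_cancel₀ hα.ne', Real.rpow_one]
  unfold sdens
  have key : ∀ q : ℝ,
      Complex.exp (((-(γ * |q| ^ α) : ℝ) : ℂ)) * Complex.exp (-(Complex.I * ((q * x : ℝ) : ℂ)))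
      = Complex.exp (((-(1 * |c⁻¹ * q| ^ α) : ℝ) : ℂ)) *
          Complex.exp (-(Complex.I * (((c⁻¹ * q) * (c * x) : ℝ) : ℂ))) := by
    intro q
    have h1 : (1 : ℝ) * |c⁻¹ * q| ^ α = γ * |q| ^ α := by
      rw [abs_mul, Real.mul_rpow (abs_nonneg _) (abs_nonneg _),
        abs_of_pos (inv_pos.2 hcpos), one_mul, hpow]
    have h2 : (c⁻¹ * q) * (c * x) = q * x := by field_simp
    rw [h1, h2]
  rw [integral_congr_ae (Filter.Eventually.of_forall key)]
  have := MeasureTheory.Measure.integral_comp_mul_left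
    (fun u : ℝ => Complex.exp (((-(1 * |u| ^ α) : ℝ) : ℂ)) *
      Complex.exp (-(Complex.I * ((u * (c * x) : ℝ) : ℂ)))) c⁻¹
  rw [this, inv_inv, abs_of_pos hcpos]
  rw [Complex.real_smul, Complex.mul_re]
  simp
  ring

lemma lintegral_comp_mul_left' (g : ℝ → ENNReal) (hg : Measurable g) {c : ℝ} (hc : c ≠ 0) :
    ∫⁻ x : ℝ, g (c * x) = ENNReal.ofReal |c⁻¹| * ∫⁻ y, g y := by
  rw [← lintegral_map hg (measurable_const_mul c), Real.map_volume_mul_left hc,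
    lintegral_smul_measure, smul_eq_mul]

lemma meas_sdens (α γ : ℝ) (hα : 0 < α) (hγ : 0 < γ) : Measurable (sdens α γ) :=
  (cont_sdens α γ hα hγ).measurable

lemma mass_eq (α γ : ℝ) (hα : 0 < α) (hγ : 0 < γ) :
    (∫⁻ x : ℝ, ENNReal.ofReal (sdens α γ x)) = ∫⁻ x : ℝ, ENNReal.ofReal (sdens α 1 x) := by
  set c := γ ^ (-(1/α)) with hc
  have hcpos : 0 < c := Real.rpow_pos_of_pos hγ _
  have h1 : ∀ x : ℝ, ENNReal.ofReal (sdens α γ x)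
      = ENNReal.ofReal c * ENNReal.ofReal (sdens α 1 (c * x)) := by
    intro x
    rw [sdens_scaling α γ x hα hγ, ENNReal.ofReal_mul hcpos.le]
  simp_rw [h1]
  rw [lintegral_const_mul (μ := volume) (ENNReal.ofReal c)
    (f := fun x => ENNReal.ofReal (sdens α 1 (c * x)))
    ((meas_sdens α 1 hα one_pos).ennreal_ofReal.comp (measurable_const_mul c))]
  rw [lintegral_comp_mul_left' _ (meas_sdens α 1 hα one_pos).ennreal_ofReal hcpos.ne']
  rw [← mul_assoc, abs_of_pos (inv_pos.2 hcpos), ← ENNReal.ofReal_mul hcpos.le,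
    mul_inv_cancel₀ hcpos.ne', ENNReal.ofReal_one, one_mul]

lemma toNNReal_sup_zero (a : ℝ) : (a ⊔ 0).toNNReal = a.toNNReal := by
  rcases le_total a 0 with h | h
  · rw [sup_eq_right.2 h, Real.toNNReal_zero, Real.toNNReal_of_nonpos h]
  · rw [sup_eq_left.2 h]

lemma expect_eq (α γ : ℝ) (hα : 0 < α) (hγ : 0 < γ)
    (hmass1 : (∫⁻ x : ℝ, ENNReal.ofReal (sdens α 1 x)) = 1)
    (hint : Integrable (fun x => Real.log (sdens α 1 x))
      (volume.withDensity fun x => ENNReal.ofReal (sdens α 1 x))) :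
    Integrable (fun x => Real.log (sdens α γ x))
      (volume.withDensity fun x => ENNReal.ofReal (sdens α γ x)) ∧
    (∫ x, Real.log (sdens α γ x) ∂(volume.withDensity fun x => ENNReal.ofReal (sdens α γ x)))
      = -(1/α) * Real.log γ +
        ∫ x, Real.log (sdens α 1 x) ∂(volume.withDensity fun x => ENNReal.ofReal (sdens α 1 x)) := by
  set c := γ ^ (-(1/α)) with hc
  have hcpos : 0 < c := Real.rpow_pos_of_pos hγ _
  set d1 : ℝ → ℝ := sdens α 1 with hd1
  set D1 : ℝ → ℝ≥0 := fun y => (d1 y).toNNReal with hD1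
  have hD1meas : Measurable D1 := (meas_sdens α 1 hα one_pos).real_toNNReal
  set Dγ : ℝ → ℝ≥0 := fun y => (sdens α γ y).toNNReal with hDγ
  have hDγmeas : Measurable Dγ := (meas_sdens α γ hα hγ).real_toNNReal
  have hν1 : (volume.withDensity fun x => ENNReal.ofReal (sdens α 1 x))
      = volume.withDensity fun x => ((D1 x : ℝ≥0) : ℝ≥0∞) := rfl
  have hνγ : (volume.withDensity fun x => ENNReal.ofReal (sdens α γ x))
      = volume.withDensity fun x => ((Dγ x : ℝ≥0) : ℝ≥0∞) := rfl
  -- pointwise splitting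
  have P1 : ∀ y : ℝ, ((D1 y : ℝ)) * Real.log (c * d1 y)
      = (D1 y : ℝ) * Real.log c + (D1 y : ℝ) * Real.log (d1 y) := by
    intro y
    by_cases h : 0 < d1 y
    · rw [Real.log_mul hcpos.ne' h.ne']; ring
    · have : D1 y = 0 := by
        simp only [hD1, Real.toNNReal_eq_zero]; linarith [not_lt.1 h]
      simp [this]
  have P2 : ∀ x : ℝ, ((Dγ x : ℝ)) * Real.log (sdens α γ x)
      = c * ((D1 (c * x) : ℝ) * Real.log (c * d1 (c * x))) := by
    intro x
    have hsc : sdens α γ x = c * d1 (c * x) := sdens_scaling α γ x hα hγ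
    have : (Dγ x : ℝ) = c * (D1 (c * x) : ℝ) := by
      simp only [hDγ, hD1, hsc, Real.toNNReal_mul hcpos.le]
      push_cast
      rw [Real.coe_toNNReal _ hcpos.le]
    rw [this, hsc]; ring
  -- integrability of the pieces
  have h_int_D1 : Integrable (fun y => (D1 y : ℝ)) volume := by
    refine ⟨(hD1meas.coe_nnreal_real).aestronglyMeasurable, ?_⟩
    rw [MeasureTheory.hasFiniteIntegral_iff_norm]
    have : ∀ y : ℝ, ENNReal.ofReal ‖(D1 y : ℝ)‖ = ENNReal.ofReal (d1 y) := by
      intro y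
      rw [Real.norm_eq_abs, abs_of_nonneg (D1 y).coe_nonneg]
      simp [hD1, ENNReal.ofReal, toNNReal_sup_zero]
    simp_rw [this]
    rw [hmass1]
    exact ENNReal.one_lt_top
  have h_int_I : Integrable (fun y => (D1 y : ℝ) * Real.log (d1 y)) volume := by
    have := (integrable_withDensity_iff_integrable_smul hD1meas
      (g := fun x => Real.log (d1 x))).1 (hν1 ▸ hint)
    simpa [NNReal.smul_def, smul_eq_mul] using this
  have h_int_H : Integrable (fun y => c * ((D1 y : ℝ) * Real.log (c * d1 y))) volume := by
    have heq : (fun y => c * ((D1 y : ℝ) * Real.log (c * d1 y)))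
        = fun y => c * ((D1 y : ℝ) * Real.log c + (D1 y : ℝ) * Real.log (d1 y)) := by
      funext y; rw [P1]
    rw [heq]
    exact ((h_int_D1.mul_const (Real.log c)).add h_int_I).const_mul c
  -- mass M = 1
  have hM : (∫ y, (D1 y : ℝ)) = 1 := by
    rw [MeasureTheory.integral_eq_lintegral_of_nonneg_ae
      (Filter.Eventually.of_forall fun y => (D1 y).coe_nonneg)
      (hD1meas.coe_nnreal_real).aestronglyMeasurable]
    have : ∀ y : ℝ, ENNReal.ofReal ((D1 y : ℝ)) = ENNReal.ofReal (d1 y) := by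
      intro y; simp [hD1, ENNReal.ofReal, toNNReal_sup_zero]
    simp_rw [this]
    rw [hmass1, ENNReal.toReal_one]
  constructor
  · rw [hνγ, integrable_withDensity_iff_integrable_smul hDγmeas]
    have heq : (fun x => Dγ x • Real.log (sdens α γ x))
        = fun x => (fun y => c * ((D1 y : ℝ) * Real.log (c * d1 y))) (c * x) := by
      funext x
      rw [NNReal.smul_def, smul_eq_mul, P2]
    rw [heq]
    exact h_int_H.comp_mul_left' hcpos.ne'
  · rw [hνγ, integral_withDensity_eq_integral_smul hDγmeas]
    have heq : (fun x => Dγ x • Real.log (sdens α γ x))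
        = fun x => (fun y => c * ((D1 y : ℝ) * Real.log (c * d1 y))) (c * x) := by
      funext x
      rw [NNReal.smul_def, smul_eq_mul, P2]
    rw [heq, MeasureTheory.Measure.integral_comp_mul_left
      (fun y => c * ((D1 y : ℝ) * Real.log (c * d1 y))) c]
    have hsplit : (∫ y, c * ((D1 y : ℝ) * Real.log (c * d1 y)))
        = c * (Real.log c + ∫ y, (D1 y : ℝ) * Real.log (d1 y)) := by
      rw [MeasureTheory.integral_const_mul]
      congr 1
      have heq2 : (fun y => (D1 y : ℝ) * Real.log (c * d1 y))
          = fun y => (D1 y : ℝ) * Real.log c + (D1 y : ℝ) * Real.log (d1 y) := by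
        funext y; rw [P1]
      rw [heq2, integral_add (h_int_D1.mul_const _) h_int_I, MeasureTheory.integral_mul_const, hM, one_mul]
    rw [hsplit]
    have hI : (∫ x, Real.log (sdens α 1 x)
        ∂(volume.withDensity fun x => ENNReal.ofReal (sdens α 1 x)))
        = ∫ y, (D1 y : ℝ) * Real.log (d1 y) := by
      rw [hν1, integral_withDensity_eq_integral_smul hD1meas]
      simp_rw [NNReal.smul_def, smul_eq_mul]
      rfl
    rw [hI, abs_of_pos (inv_pos.2 hcpos), smul_eq_mul]
    have hlc : Real.log c = -(1/α) * Real.log γ := by rw [hc, Real.log_rpow hγ]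
    rw [hlc, ← mul_assoc, inv_mul_cancel₀ hcpos.ne', one_mul]

lemma sdens_mass_ne_zero (α γ : ℝ) (hα : 0 < α) (hγ : 0 < γ) :
    (∫⁻ x : ℝ, ENNReal.ofReal (sdens α γ x)) ≠ 0 := by
  intro h0
  rw [lintegral_eq_zero_iff (meas_sdens α γ hα hγ).ennreal_ofReal] at h0
  have hU : IsOpen {x : ℝ | 0 < sdens α γ x} :=
    isOpen_lt continuous_const (cont_sdens α γ hα hγ)
  have h0mem : (0:ℝ) ∈ {x : ℝ | 0 < sdens α γ x} := sdens_zero_pos α γ hα hγ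
  have hnull : volume {x : ℝ | 0 < sdens α γ x} = 0 := by
    refine measure_mono_null ?_ (ae_iff.1 h0)
    intro x hx
    simp only [Set.mem_setOf_eq, Pi.zero_apply]
    exact (ENNReal.ofReal_pos.2 hx).ne'
  exact absurd hnull (hU.measure_pos volume ⟨0, h0mem⟩).ne'

theorem stmt14 {Ω : Type*} [MeasurableSpace Ω] (P : Measure Ω) [IsProbabilityMeasure P]
    (α : ℝ) (hα : 0 < α) (hα2 : α ≤ 2)
    (hint : Integrable (fun x => Real.log (sdens α 1 x))
      (volume.withDensity fun x => ENNReal.ofReal (sdens α 1 x)))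
    (m : ℕ) (hm : 1 ≤ m)
    (γ γ' : Fin m → ℝ) (hγ : ∀ j, 0 < γ j) (hγ' : ∀ j, 0 < γ' j)
    (k k' : ℕ)
    (Z Z' : Fin m → ℕ → Ω → ℝ)
    (hZindep : iIndepFun
      (fun p : Fin m × ℕ => Z p.1 p.2) P)
    (hZ'indep : iIndepFun
      (fun p : Fin m × ℕ => Z' p.1 p.2) P)
    (hZ : ∀ j n, Measure.map (Z j n) P =
      volume.withDensity fun x => ENNReal.ofReal (sdens α (γ j) x))
    (hZ' : ∀ j n, Measure.map (Z' j n) P =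
      volume.withDensity fun x => ENNReal.ofReal (sdens α (γ' j) x)) :
    ∀ᵐ ω ∂P,
      Filter.Tendsto
        (fun N : ℕ => (1 / (N : ℝ)) *
          (((∑ j, ∑ l ∈ Finset.range N, Real.log (sdens α (γ j) (Z j l ω))) -
              (k : ℝ) / 2 * Real.log N) -
            ((∑ j, ∑ l ∈ Finset.range N, Real.log (sdens α (γ' j) (Z' j l ω))) -
              (k' : ℝ) / 2 * Real.log N)))
        Filter.atTop
        (nhds (-(1 / α) * ∑ j, (Real.log (γ j) - Real.log (γ' j)))) ∧
      Filter.Tendsto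
        (fun N : ℕ => (1 / (N : ℝ)) *
          ((-∑ j, ((N : ℝ) * (Real.log (γ j) / α) + (k : ℝ) / 2 * Real.log N)) -
            (-∑ j, ((N : ℝ) * (Real.log (γ' j) / α) + (k' : ℝ) / 2 * Real.log N))))
        Filter.atTop
        (nhds (-(1 / α) * ∑ j, (Real.log (γ j) - Real.log (γ' j)))) := by
  classical
  set I1 : ℝ := ∫ x, Real.log (sdens α 1 x)
      ∂(volume.withDensity fun x => ENNReal.ofReal (sdens α 1 x)) with hI1
  -- log N / N → 0
  have T0 : Filter.Tendsto (fun N : ℕ => Real.log N / (N : ℝ)) Filter.atTop (nhds 0) :=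
    (Real.isLittleO_log_id_atTop.tendsto_div_nhds_zero).comp tendsto_natCast_atTop_atTop
  -- masses
  have j0 : Fin m := ⟨0, hm⟩
  -- generic SLLN part
  have key : ∀ (γv : Fin m → ℝ), (∀ j, 0 < γv j) →
      ∀ (W : Fin m → ℕ → Ω → ℝ),
      (ProbabilityTheory.iIndepFun
        (fun p : Fin m × ℕ => W p.1 p.2) P) →
      (∀ j n, Measure.map (W j n) P =
        volume.withDensity fun x => ENNReal.ofReal (sdens α (γv j) x)) →
      ∀ j : Fin m, ∀ᵐ ω ∂P,
        Filter.Tendsto (fun N : ℕ => (N : ℝ)⁻¹ •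
            ∑ l ∈ Finset.range N, Real.log (sdens α (γv j) (W j l ω)))
          Filter.atTop (nhds (-(1/α) * Real.log (γv j) + I1)) := by
    intro γv hγv W hWindep hWmap j
    have hγj := hγv j
    -- a.e. measurability of W j n
    have haem : ∀ n, AEMeasurable (W j n) P := by
      intro n
      by_contra hn
      have h0 := Measure.map_of_not_aemeasurable (f := W j n) (μ := P) hn
      rw [hWmap j n] at h0
      have := congrArg (fun μ : Measure ℝ => μ Set.univ) h0
      simp only [Measure.coe_zero, Pi.zero_apply] at this
      rw [withDensity_apply _ MeasurableSet.univ, Measure.restrict_univ] at this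
      exact sdens_mass_ne_zero α (γv j) hα hγj this
    -- mass of ν_{γv j} is 1
    have hmassγ : (∫⁻ x : ℝ, ENNReal.ofReal (sdens α (γv j) x)) = 1 := by
      have := congrArg (fun μ : Measure ℝ => μ Set.univ) (hWmap j 0)
      rw [Measure.map_apply_of_aemeasurable (haem 0) MeasurableSet.univ, Set.preimage_univ,
        measure_univ, withDensity_apply _ MeasurableSet.univ, Measure.restrict_univ] at this
      exact this.symm
    have hmass1 : (∫⁻ x : ℝ, ENNReal.ofReal (sdens α 1 x)) = 1 := by
      rw [← mass_eq α (γv j) hα hγj]; exact hmassγ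
    obtain ⟨hInt, hE⟩ := expect_eq α (γv j) hα hγj hmass1 hint
    set g : ℝ → ℝ := fun x => Real.log (sdens α (γv j) x) with hg
    have hgmeas : Measurable g := (meas_sdens α (γv j) hα hγj).log
    set X : ℕ → Ω → ℝ := fun l ω => g (W j l ω) with hX
    have hXint : Integrable (X 0) P := by
      have := (integrable_map_measure hgmeas.aestronglyMeasurable (haem 0)).1
        (by rw [hWmap j 0]; exact hInt)
      exact this
    have hXindep : Pairwise (Function.onFun (ProbabilityTheory.IndepFun · · P) X) := by
      intro a b hab
      have : ((j, a) : Fin m × ℕ) ≠ (j, b) := by simp [hab]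
      exact (hWindep.indepFun this).comp hgmeas hgmeas
    have hXident : ∀ l, ProbabilityTheory.IdentDistrib (X l) (X 0) P P := by
      intro l
      have hbase : ProbabilityTheory.IdentDistrib (W j l) (W j 0) P P :=
        ⟨haem l, haem 0, by rw [hWmap j l, hWmap j 0]⟩
      exact hbase.comp hgmeas
    have hslln := ProbabilityTheory.strong_law_ae X hXint hXindep hXident
    have hEX : (∫ ω, X 0 ω ∂P) = -(1/α) * Real.log (γv j) + I1 := by
      rw [hX]
      have := MeasureTheory.integral_map (haem 0) hgmeas.aestronglyMeasurable
        (f := fun x => g x) (φ := W j 0) (μ := P)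
      rw [← this, hWmap j 0, hE]
    filter_upwards [hslln] with ω hω
    rw [hEX] at hω
    exact hω
  have hkeyZ := key γ hγ Z hZindep hZ
  have hkeyZ' := key γ' hγ' Z' hZ'indep hZ'
  rw [← MeasureTheory.ae_all_iff] at hkeyZ
  rw [← MeasureTheory.ae_all_iff] at hkeyZ'
  filter_upwards [hkeyZ, hkeyZ'] with ω hωZ hωZ'
  constructor
  · -- BIC part
    have TA := tendsto_finset_sum (Finset.univ : Finset (Fin m))
      (fun j _ => hωZ j)
    have TB := tendsto_finset_sum (Finset.univ : Finset (Fin m))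
      (fun j _ => hωZ' j)
    have Tcomb := (TA.sub TB).add (T0.const_mul ((k' : ℝ)/2 - (k : ℝ)/2))
    have hfun : (fun N : ℕ => (1 / (N : ℝ)) *
          (((∑ j, ∑ l ∈ Finset.range N, Real.log (sdens α (γ j) (Z j l ω))) -
              (k : ℝ) / 2 * Real.log N) -
            ((∑ j, ∑ l ∈ Finset.range N, Real.log (sdens α (γ' j) (Z' j l ω))) -
              (k' : ℝ) / 2 * Real.log N)))
        = fun N : ℕ =>
            ((∑ j, (N : ℝ)⁻¹ • ∑ l ∈ Finset.range N, Real.log (sdens α (γ j) (Z j l ω))) -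
             (∑ j, (N : ℝ)⁻¹ • ∑ l ∈ Finset.range N, Real.log (sdens α (γ' j) (Z' j l ω)))) +
            ((k' : ℝ)/2 - (k : ℝ)/2) * (Real.log N / (N : ℝ)) := by
      funext N
      simp only [smul_eq_mul, ← Finset.mul_sum]
      rw [one_div]
      ring
    rw [hfun]
    convert Tcomb using 2
    rw [mul_zero, add_zero, ← Finset.sum_sub_distrib]
    rw [Finset.mul_sum]
    congr 1
    funext j
    ring
  · -- MDC part
    have hA : ∀ N : ℕ, (∑ j, ((N : ℝ) * (Real.log (γ j) / α) + (k : ℝ) / 2 * Real.log N))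
        = (N : ℝ) * (∑ j, Real.log (γ j) / α) + (m : ℝ) * ((k : ℝ) / 2 * Real.log N) := by
      intro N
      rw [Finset.sum_add_distrib, ← Finset.mul_sum, Finset.sum_const, Finset.card_univ,
        Fintype.card_fin, nsmul_eq_mul]
    have hA' : ∀ N : ℕ, (∑ j, ((N : ℝ) * (Real.log (γ' j) / α) + (k' : ℝ) / 2 * Real.log N))
        = (N : ℝ) * (∑ j, Real.log (γ' j) / α) + (m : ℝ) * ((k' : ℝ) / 2 * Real.log N) := by
      intro N
      rw [Finset.sum_add_distrib, ← Finset.mul_sum, Finset.sum_const, Finset.card_univ,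
        Fintype.card_fin, nsmul_eq_mul]
    have heq : (fun N : ℕ => (1 / (N : ℝ)) *
          ((-∑ j, ((N : ℝ) * (Real.log (γ j) / α) + (k : ℝ) / 2 * Real.log N)) -
            (-∑ j, ((N : ℝ) * (Real.log (γ' j) / α) + (k' : ℝ) / 2 * Real.log N))))
        =ᶠ[Filter.atTop] (fun N : ℕ =>
          ((∑ j, Real.log (γ' j) / α) - (∑ j, Real.log (γ j) / α)) +
            ((m : ℝ) * ((k' : ℝ)/2) - (m : ℝ) * ((k : ℝ)/2)) * (Real.log N / (N : ℝ))) := by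
      filter_upwards [Filter.eventually_ge_atTop 1] with N hN
      have hN0 : (N : ℝ) ≠ 0 := Nat.cast_ne_zero.2 (by omega)
      rw [hA, hA']
      field_simp
      ring
    have Tlim := (tendsto_const_nhds (x := (∑ j, Real.log (γ' j) / α) - (∑ j, Real.log (γ j) / α))
        (f := Filter.atTop (α := ℕ))).add
      (T0.const_mul ((m : ℝ) * ((k' : ℝ)/2) - (m : ℝ) * ((k : ℝ)/2)))
    rw [mul_zero, add_zero] at Tlim
    have hpt : (∑ j, Real.log (γ' j) / α) - (∑ j, Real.log (γ j) / α)
        = -(1/α) * ∑ j, (Real.log (γ j) - Real.log (γ' j)) := by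
      rw [← Finset.sum_div, ← Finset.sum_div, Finset.sum_sub_distrib]
      ring
    rw [← hpt]
    exact Filter.Tendsto.congr' heq.symm Tlim
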